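/- For all real numbers 0 < a < b and every z > 0, log((a+b+2z)/2) − ((b+z)·log(b+z) − (a+z)·log(a+z))/(b−a) < log((a+b)/2) − (b·log b − a·log a)/(b−a). Equivalently, the entropy-based epistemic uncertainty of the uniform second-order distribution U(a+z, b+z) over the variance parameter of a zero-mean Gaussian predictive distribution is strictly smaller than that of U(a, b); hence the entropy-based epistemic uncertainty is not invariant under spread-preserving location shifts (violating axiom A5). -/

import Mathlib

open Real

/-- Logarithmic mean is less than arithmetic mean: `2(y-x)/(x+y) < log y - log x`. -/
lemma key_log_mean_ineq (x y : ℝ) (hx : 0 < x) (hxy : x < y) :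
    2 * (y - x) / (x + y) < Real.log y - Real.log x := by
  have hy : 0 < y := hx.trans hxy
  set φ : ℝ → ℝ := fun t => Real.log t - 2 * (t - 1) / (t + 1) with hφ
  have hder : ∀ t : ℝ, 0 < t →
      HasDerivAt φ (1 / t - 4 / (t + 1) ^ 2) t := by
    intro t ht
    have h1 : HasDerivAt Real.log (1 / t) t := by
      simpa [one_div] using Real.hasDerivAt_log ht.ne'
    have h2 : HasDerivAt (fun t : ℝ => 2 * (t - 1)) 2 t := by
      simpa using ((hasDerivAt_id t).sub_const 1).const_mul 2
    have h3 : HasDerivAt (fun t : ℝ => t + 1) 1 t := (hasDerivAt_id t).add_const 1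
    have hne : t + 1 ≠ 0 := by nlinarith
    have h4 := h2.div h3 hne
    have h5 := h1.sub h4
    refine h5.congr_deriv ?_
    field_simp
    ring_nf
  have hmono : StrictMonoOn φ (Set.Ici 1) := by
    apply strictMonoOn_of_deriv_pos (convex_Ici 1)
    · intro t ht
      exact (hder t (lt_of_lt_of_le one_pos ht)).continuousAt.continuousWithinAt
    · intro t ht
      rw [interior_Ici] at ht
      have ht1 : (1:ℝ) < t := ht
      have ht0 : 0 < t := lt_trans one_pos ht1
      rw [(hder t ht0).deriv]
      have h : 4 / (t + 1) ^ 2 < 1 / t := by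
        rw [div_lt_div_iff₀ (by positivity) ht0]
        nlinarith [sq_nonneg (t - 1)]
      linarith
  have hmem1 : (1:ℝ) ∈ Set.Ici (1:ℝ) := Set.mem_Ici.mpr le_rfl
  have hmem2 : y / x ∈ Set.Ici (1:ℝ) := by
    rw [Set.mem_Ici, le_div_iff₀ hx]; linarith
  have hlt : (1:ℝ) < y / x := by rw [lt_div_iff₀ hx]; linarith
  have h1 := hmono hmem1 hmem2 hlt
  have hφ1 : φ 1 = 0 := by simp [hφ]
  have hlog : Real.log (y / x) = Real.log y - Real.log x := Real.log_div hy.ne' hx.ne'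
  have heq : 2 * (y / x - 1) / (y / x + 1) = 2 * (y - x) / (x + y) := by
    rw [div_eq_div_iff (by positivity) (by positivity)]
    field_simp
    ring_nf
  have h2 : φ (y / x) = Real.log y - Real.log x - 2 * (y - x) / (x + y) := by
    simp only [hφ]
    rw [hlog, heq]
  rw [hφ1, h2] at h1
  linarith

/-- A spread-preserving location shift by `z > 0` strictly decreases the entropy-based
epistemic uncertainty of the uniform second-order distribution `U(a,b)` over the variance
parameter of a zero-mean Gaussian: the entropy-based measure violates axiom A5. -/
theorem entropy_EU_not_location_invariant (a b z : ℝ) (ha : 0 < a) (hab : a < b)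
    (hz : 0 < z) :
    Real.log ((a + b + 2 * z) / 2)
        - ((b + z) * Real.log (b + z) - (a + z) * Real.log (a + z)) / (b - a)
      < Real.log ((a + b) / 2) - (b * Real.log b - a * Real.log a) / (b - a) := by
  have hba : 0 < b - a := by linarith
  set g : ℝ → ℝ := fun z => Real.log ((a + b + 2 * z) / 2)
      - ((b + z) * Real.log (b + z) - (a + z) * Real.log (a + z)) / (b - a) with hg
  have hder : ∀ t : ℝ, 0 ≤ t →
      HasDerivAt g (2 / (a + b + 2 * t)
        - ((Real.log (b + t) + 1) - (Real.log (a + t) + 1)) / (b - a)) t := by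
    intro t ht
    have hat : 0 < a + t := by linarith
    have hbt : 0 < b + t := by linarith
    have habt : 0 < (a + b + 2 * t) / 2 := by linarith
    have h1 : HasDerivAt (fun t : ℝ => (a + b + 2 * t) / 2) 1 t := by
      simpa using (((hasDerivAt_id t).const_mul 2).const_add (a + b)).div_const 2
    have h2 : HasDerivAt (fun t : ℝ => Real.log ((a + b + 2 * t) / 2))
        (1 / ((a + b + 2 * t) / 2)) t := by
      simpa [one_div, Function.comp_def] using (Real.hasDerivAt_log habt.ne').comp t h1
    have hb1 : HasDerivAt (fun t : ℝ => b + t) 1 t := (hasDerivAt_id t).const_add b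
    have ha1 : HasDerivAt (fun t : ℝ => a + t) 1 t := (hasDerivAt_id t).const_add a
    have hb2 : HasDerivAt (fun t : ℝ => Real.log (b + t)) (1 / (b + t)) t := by
      simpa [one_div, Function.comp_def] using (Real.hasDerivAt_log hbt.ne').comp t hb1
    have ha2 : HasDerivAt (fun t : ℝ => Real.log (a + t)) (1 / (a + t)) t := by
      simpa [one_div, Function.comp_def] using (Real.hasDerivAt_log hat.ne').comp t ha1
    have hb3 : HasDerivAt (fun t : ℝ => (b + t) * Real.log (b + t))
        (Real.log (b + t) + 1) t := by
      have := hb1.mul hb2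
      refine this.congr_deriv ?_
      field_simp
    have ha3 : HasDerivAt (fun t : ℝ => (a + t) * Real.log (a + t))
        (Real.log (a + t) + 1) t := by
      have := ha1.mul ha2
      refine this.congr_deriv ?_
      field_simp
    have h4 := (hb3.sub ha3).div_const (b - a)
    have h5 := h2.sub h4
    refine h5.congr_deriv ?_
    rw [one_div_div]
  have hanti : StrictAntiOn g (Set.Ici 0) := by
    apply strictAntiOn_of_deriv_neg (convex_Ici 0)
    · intro t ht
      exact (hder t ht).continuousAt.continuousWithinAt
    · intro t ht
      rw [interior_Ici] at ht
      have ht0 : (0:ℝ) < t := ht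
      rw [(hder t ht0.le).deriv]
      have hkey := key_log_mean_ineq (a + t) (b + t) (by linarith) (by linarith)
      have h1 : 2 * ((b + t) - (a + t)) / ((a + t) + (b + t)) = 2 * (b - a) / (a + b + 2 * t) := by
        ring_nf
      rw [h1] at hkey
      have habt : 0 < a + b + 2 * t := by linarith
      have h2 : 2 / (a + b + 2 * t) < (Real.log (b + t) - Real.log (a + t)) / (b - a) := by
        rw [div_lt_div_iff₀ habt hba]
        rw [div_lt_iff₀ habt] at hkey
        nlinarith
      have h3 : (Real.log (b + t) + 1) - (Real.log (a + t) + 1)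
          = Real.log (b + t) - Real.log (a + t) := by ring
      rw [h3]
      linarith
  have h := hanti (Set.self_mem_Ici) (Set.mem_Ici.mpr hz.le) hz
  simpa [hg] using h
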